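/- Let W₁, …, Wₙ be i.i.d. exponential random variables with rate λ > 0, and let Sₙ = Σ_{k=1}^n min{W₁,…,W_k}. Then for every real s with s/λ < 1, the moment generating function satisfies E[e^{s Sₙ}] = ∏_{k=1}^n ( 1 + (s/λ) / ( k (1 - s/λ) ) ). -/

import Mathlib

open MeasureTheory Set Filter

/-- `minFirst W n ω = min {W 0 ω, …, W (n-1) ω}` for `n ≥ 1` (junk value `W 0 ω` for `n = 0`). -/
noncomputable def minFirst {Ω : Type*} (W : ℕ → Ω → ℝ) : ℕ → Ω → ℝ
  | 0, ω => W 0 ω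
  | n + 1, ω => min (minFirst W n ω) (W n ω)

section Aux
open Real ProbabilityTheory
open scoped NNReal ENNReal

lemma mu_eq {lam : ℝ} (hlam : 0 < lam) (μ : Measure ℝ) [IsProbabilityMeasure μ]
    (hexp : ∀ x : ℝ, 0 ≤ x → μ (Ioi x) = ENNReal.ofReal (Real.exp (-(lam * x)))) :
    μ = (volume : Measure ℝ).withDensity (exponentialPDF lam) := by
  have hpm : IsProbabilityMeasure (expMeasure lam) := isProbabilityMeasure_expMeasure hlam
  have hIic : ∀ x : ℝ, μ (Iic x) = ENNReal.ofReal (if 0 ≤ x then 1 - Real.exp (-(lam * x)) else 0) := by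
    have key : ∀ x : ℝ, 0 ≤ x → μ (Iic x) = ENNReal.ofReal (1 - Real.exp (-(lam * x))) := by
      intro x hx
      have : Iic x = (Ioi x)ᶜ := by simp
      rw [this, measure_compl measurableSet_Ioi (measure_ne_top μ _), hexp x hx,
        measure_univ, ENNReal.ofReal_sub _ (Real.exp_pos _).le]
      simp
    intro x
    by_cases hx : 0 ≤ x
    · rw [key x hx, if_pos hx]
    · rw [if_neg hx, ENNReal.ofReal_zero]
      have h0 : μ (Iic 0) = 0 := by
        rw [key 0 le_rfl]; simp
      exact le_antisymm (le_trans (measure_mono (Iic_subset_Iic.2 (le_of_not_ge hx))) h0.le) zero_le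
  have hcdf : cdf μ = cdf (expMeasure lam) := by
    ext x
    have h1 : cdf μ x = (μ (Iic x)).toReal := by rw [cdf_eq_real, measureReal_def]
    have h2 : cdf (expMeasure lam) x = if 0 ≤ x then 1 - Real.exp (-(lam * x)) else 0 :=
      cdf_expMeasure_eq hlam x
    rw [h1, h2, hIic x, ENNReal.toReal_ofReal]
    split_ifs with h
    · have : Real.exp (-(lam * x)) ≤ 1 := by
        rw [Real.exp_le_one_iff]; nlinarith
      linarith
    · exact le_rfl
  have := MeasureTheory.Measure.eq_of_cdf μ (expMeasure lam) hcdf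
  rw [this]; rfl

lemma int_exp_Ioi {b : ℝ} (hb : 0 < b) (c : ℝ) :
    ∫ x in Ioi c, Real.exp (-(b*x)) = Real.exp (-(b*c))/b := by
  have h := integral_comp_mul_left_Ioi (fun x => Real.exp (-x)) c hb
  simp only [integral_exp_neg_Ioi, smul_eq_mul] at h
  rw [h]; ring

lemma pdfReal_eq {lam : ℝ} (x : ℝ) :
    exponentialPDFReal lam x = if 0 ≤ x then lam * Real.exp (-(lam * x)) else 0 := by
  rw [exponentialPDFReal, gammaPDFReal]
  simp only [rpow_one, Real.Gamma_one, div_one, sub_self, rpow_zero, mul_one]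

lemma pdf_mul_eq {lam : ℝ} (a : ℝ) : (fun x => exponentialPDFReal lam x * Real.exp (a * x)) =
    Set.indicator (Ici 0) (fun x => lam * Real.exp (-((lam - a) * x))) := by
  funext x
  by_cases hx : 0 ≤ x
  · rw [pdfReal_eq x, if_pos hx, Set.indicator_of_mem (show x ∈ Ici 0 from hx),
      mul_assoc, ← Real.exp_add]
    congr 2; ring
  · rw [pdfReal_eq x, if_neg hx, Set.indicator_of_notMem (show x ∉ Ici 0 from hx), zero_mul]

lemma ae_pos {lam : ℝ} (μ : Measure ℝ) [IsProbabilityMeasure μ]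
    (hexp : ∀ x : ℝ, 0 ≤ x → μ (Ioi x) = ENNReal.ofReal (Real.exp (-(lam * x)))) :
    ∀ᵐ x ∂μ, 0 < x := by
  rw [ae_iff]
  have : {x : ℝ | ¬ 0 < x} = (Ioi 0)ᶜ := by ext x; simp
  rw [this, measure_compl measurableSet_Ioi (measure_ne_top μ _), hexp 0 le_rfl]
  simp

lemma integral_mu {lam : ℝ} (hlam : 0 < lam) (μ : Measure ℝ)
    (hμ : μ = (volume : Measure ℝ).withDensity (exponentialPDF lam)) (g : ℝ → ℝ) :
    ∫ x, g x ∂μ = ∫ x, exponentialPDFReal lam x * g x := by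
  have hm : Measurable (fun x => Real.toNNReal (exponentialPDFReal lam x)) :=
    (measurable_exponentialPDFReal lam).real_toNNReal
  have hd : (fun x => (Real.toNNReal (exponentialPDFReal lam x) : ℝ≥0∞)) = exponentialPDF lam := by
    funext x; rw [exponentialPDF]; rfl
  rw [hμ, ← hd, integral_withDensity_eq_integral_smul hm]
  congr 1; funext x
  rw [NNReal.smul_def, smul_eq_mul, Real.coe_toNNReal _ (exponentialPDFReal_nonneg hlam x)]

lemma setIntegral_mu {lam : ℝ} (hlam : 0 < lam) (μ : Measure ℝ)
    (hμ : μ = (volume : Measure ℝ).withDensity (exponentialPDF lam)) (g : ℝ → ℝ)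
    {s : Set ℝ} (hs : MeasurableSet s) :
    ∫ x in s, g x ∂μ = ∫ x in s, exponentialPDFReal lam x * g x := by
  have hm : Measurable (fun x => Real.toNNReal (exponentialPDFReal lam x)) :=
    (measurable_exponentialPDFReal lam).real_toNNReal
  have hd : (fun x => (Real.toNNReal (exponentialPDFReal lam x) : ℝ≥0∞)) = exponentialPDF lam := by
    funext x; rw [exponentialPDF]; rfl
  rw [hμ, ← hd, restrict_withDensity hs, integral_withDensity_eq_integral_smul hm]
  congr 1; funext x
  rw [NNReal.smul_def, smul_eq_mul, Real.coe_toNNReal _ (exponentialPDFReal_nonneg hlam x)]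

lemma integrable_mu_iff {lam : ℝ} (hlam : 0 < lam) (μ : Measure ℝ)
    (hμ : μ = (volume : Measure ℝ).withDensity (exponentialPDF lam)) (g : ℝ → ℝ) :
    Integrable g μ ↔ Integrable (fun x => exponentialPDFReal lam x * g x) volume := by
  have hm : Measurable (fun x => Real.toNNReal (exponentialPDFReal lam x)) :=
    (measurable_exponentialPDFReal lam).real_toNNReal
  have hd : (fun x => (Real.toNNReal (exponentialPDFReal lam x) : ℝ≥0∞)) = exponentialPDF lam := by
    funext x; rw [exponentialPDF]; rfl
  rw [hμ, ← hd, integrable_withDensity_iff_integrable_smul hm]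
  constructor <;> intro h <;> refine h.congr (Eventually.of_forall fun x => ?_) <;>
    simp only [NNReal.smul_def, smul_eq_mul, Real.coe_toNNReal _ (exponentialPDFReal_nonneg hlam x)]

lemma integrable_exp_mul {lam : ℝ} (hlam : 0 < lam) (μ : Measure ℝ)
    (hμ : μ = (volume : Measure ℝ).withDensity (exponentialPDF lam)) {a : ℝ} (ha : a < lam) :
    Integrable (fun x => Real.exp (a * x)) μ := by
  rw [integrable_mu_iff hlam μ hμ, pdf_mul_eq a, integrable_indicator_iff measurableSet_Ici]
  have h0 : IntegrableOn (fun x => Real.exp (-(lam - a) * x)) (Ioi 0) volume :=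
    exp_neg_integrableOn_Ioi 0 (by linarith)
  simp only [neg_mul] at h0
  exact (integrableOn_Ici_iff_integrableOn_Ioi).mpr (h0.const_mul lam)

lemma integral_exp_mul {lam : ℝ} (hlam : 0 < lam) (μ : Measure ℝ)
    (hμ : μ = (volume : Measure ℝ).withDensity (exponentialPDF lam)) {a : ℝ} (ha : a < lam) :
    ∫ x, Real.exp (a * x) ∂μ = lam / (lam - a) := by
  rw [integral_mu hlam μ hμ, pdf_mul_eq a, integral_indicator measurableSet_Ici,
    integral_Ici_eq_integral_Ioi, integral_const_mul, int_exp_Ioi (by linarith : (0:ℝ) < lam - a)]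
  simp [div_eq_mul_inv]

lemma interval_exp {c : ℝ} (hc : c ≠ 0) (m : ℝ) :
    ∫ x in (0:ℝ)..m, Real.exp (-(c * x)) = (1 - Real.exp (-(c * m)))/c := by
  have h := intervalIntegral.integral_comp_mul_left (a := (0:ℝ)) (b := m)
    (fun y => Real.exp (-y)) hc
  beta_reduce at h
  rw [h]
  have h2 := intervalIntegral.integral_comp_neg (a := c * 0) (b := c * m) (fun y => Real.exp y)
  beta_reduce at h2
  rw [h2, integral_exp]
  simp only [mul_zero, neg_zero, Real.exp_zero, smul_eq_mul]
  field_simp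

lemma integrable_exp_min {lam : ℝ} (μ : Measure ℝ) [IsProbabilityMeasure μ]
    (hexp : ∀ x : ℝ, 0 ≤ x → μ (Ioi x) = ENNReal.ofReal (Real.exp (-(lam * x))))
    {a m : ℝ} (hm : 0 ≤ m) :
    Integrable (fun x => Real.exp (a * min m x)) μ := by
  have hb : ∀ᵐ x ∂μ, ‖Real.exp (a * min m x)‖ ≤ Real.exp (|a| * m) := by
    filter_upwards [ae_pos μ hexp] with x hx
    rw [Real.norm_eq_abs, Real.abs_exp]
    apply Real.exp_le_exp.2
    have h1 : 0 ≤ min m x := le_min hm hx.le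
    calc a * min m x ≤ |a| * min m x := mul_le_mul_of_nonneg_right (le_abs_self a) h1
      _ ≤ |a| * m := mul_le_mul_of_nonneg_left (min_le_left m x) (abs_nonneg a)
  exact Integrable.mono' (integrable_const _)
    ((Real.measurable_exp.comp ((measurable_const.min measurable_id).const_mul a)).aestronglyMeasurable) hb

lemma integral_exp_min {lam : ℝ} (hlam : 0 < lam) (μ : Measure ℝ) [IsProbabilityMeasure μ]
    (hμ : μ = (volume : Measure ℝ).withDensity (exponentialPDF lam))
    (hexp : ∀ x : ℝ, 0 ≤ x → μ (Ioi x) = ENNReal.ofReal (Real.exp (-(lam * x))))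
    {a m : ℝ} (ha : a < lam) (hm : 0 ≤ m) :
    ∫ x, Real.exp (a * min m x) ∂μ
      = lam / (lam - a) - a / (lam - a) * Real.exp ((a - lam) * m) := by
  have hla : (0:ℝ) < lam - a := by linarith
  have hint := integrable_exp_min μ hexp hm (a := a)
  have hsplit := integral_add_compl (measurableSet_Iic (a := m)) hint
  rw [compl_Iic] at hsplit
  rw [← hsplit]
  have h2 : ∫ x in Ioi m, Real.exp (a * min m x) ∂μ = Real.exp ((a - lam) * m) := by
    rw [setIntegral_congr_fun measurableSet_Ioi
      (g := fun _ => Real.exp (a * m)) (fun x hx => by rw [min_eq_left (le_of_lt hx)]),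
      setIntegral_const, measureReal_def, hexp m hm, smul_eq_mul,
      ENNReal.toReal_ofReal (Real.exp_pos _).le, ← Real.exp_add]
    congr 1; ring
  have h1 : ∫ x in Iic m, Real.exp (a * min m x) ∂μ
      = lam / (lam - a) * (1 - Real.exp (-((lam - a) * m))) := by
    rw [setIntegral_congr_fun measurableSet_Iic
      (g := fun x => Real.exp (a * x)) (fun x hx => by rw [min_eq_right hx]),
      setIntegral_mu hlam μ hμ _ measurableSet_Iic, pdf_mul_eq a,
      integral_indicator measurableSet_Ici, Measure.restrict_restrict measurableSet_Ici,
      Ici_inter_Iic, integral_Icc_eq_integral_Ioc,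
      ← intervalIntegral.integral_of_le hm, intervalIntegral.integral_const_mul,
      interval_exp (ne_of_gt hla)]
    field_simp
  rw [h1, h2]
  have hm' : -((lam - a) * m) = (a - lam) * m := by ring
  rw [hm']
  field_simp
  ring

noncomputable def mf (u : ℕ → ℝ) : ℕ → ℝ
  | 0 => u 0
  | n + 1 => min (mf u n) (u n)

lemma minFirst_eq_mf {Ω : Type*} (W : ℕ → Ω → ℝ) (k : ℕ) (ω : Ω) :
    minFirst W k ω = mf (fun i => W i ω) k := by
  induction k with
  | zero => rfl
  | succ k ih => rw [minFirst, mf, ih]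

lemma mf_congr {u v : ℕ → ℝ} {n : ℕ} (h : ∀ i < n, u i = v i) :
    ∀ k, 1 ≤ k → k ≤ n → mf u k = mf v k := by
  intro k
  induction k with
  | zero => omega
  | succ k ih =>
    intro _ hk
    by_cases hk0 : k = 0
    · subst hk0
      show min (mf u 0) (u 0) = min (mf v 0) (v 0)
      rw [mf, mf, h 0 (by omega)]
    · rw [mf, mf, ih (by omega) (by omega), h k (by omega)]

lemma measurable_mf (k : ℕ) : Measurable (fun u : ℕ → ℝ => mf u k) := by
  induction k with
  | zero => exact measurable_pi_apply 0
  | succ k ih => exact ih.min (measurable_pi_apply k)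

lemma measurable_minFirst {Ω : Type*} [MeasurableSpace Ω] {W : ℕ → Ω → ℝ}
    (hmeas : ∀ i, Measurable (W i)) (k : ℕ) : Measurable (fun ω => minFirst W k ω) := by
  have : (fun ω => minFirst W k ω) = (fun u => mf u k) ∘ (fun ω i => W i ω) := by
    funext ω; exact minFirst_eq_mf W k ω
  rw [this]
  exact (measurable_mf k).comp (measurable_pi_lambda _ fun i => hmeas i)

lemma minFirst_pos {Ω : Type*} [MeasurableSpace Ω] {P : Measure Ω} {W : ℕ → Ω → ℝ}
    (h : ∀ i, ∀ᵐ ω ∂P, 0 < W i ω) (k : ℕ) : ∀ᵐ ω ∂P, 0 < minFirst W k ω := by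
  induction k with
  | zero => exact h 0
  | succ k ih =>
    filter_upwards [ih, h k] with ω h1 h2
    exact lt_min h1 h2

lemma key {Ω : Type*} [MeasurableSpace Ω] (P : Measure Ω) [IsProbabilityMeasure P]
    {lam : ℝ} (hlam : 0 < lam)
    (W : ℕ → Ω → ℝ) (μ : Measure ℝ) [IsProbabilityMeasure μ]
    (hmeas : ∀ i, Measurable (W i))
    (hindep : ProbabilityTheory.iIndepFun W P)
    (hdist : ∀ i, Measure.map (W i) P = μ)
    (hμ : μ = (volume : Measure ℝ).withDensity (exponentialPDF lam))
    (hexp : ∀ x : ℝ, 0 ≤ x → μ (Ioi x) = ENNReal.ofReal (Real.exp (-(lam * x))))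
    {s : ℝ} (hslam : s < lam) :
    ∀ n, 1 ≤ n → ∀ j : ℕ,
      Integrable (fun ω => Real.exp (s * ∑ k ∈ Finset.Icc 1 n, minFirst W k ω
        + (j:ℝ)*(s-lam) * minFirst W n ω)) P ∧
      ∫ ω, Real.exp (s * ∑ k ∈ Finset.Icc 1 n, minFirst W k ω
        + (j:ℝ)*(s-lam) * minFirst W n ω) ∂P
        = (n:ℝ)/((n:ℝ)+(j:ℝ)) * ∏ k ∈ Finset.Icc 1 n, (1 + (s/lam)/((k:ℝ)*(1-s/lam))) := by
  have hlam0 : lam ≠ 0 := ne_of_gt hlam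
  have hls : (0:ℝ) < lam - s := by linarith
  have hθ : 0 < 1 - s/lam := by
    rw [sub_pos, div_lt_one hlam]; exact hslam
  have hWpos : ∀ i, ∀ᵐ ω ∂P, 0 < W i ω := by
    intro i
    have h2 : ∀ᵐ x ∂(Measure.map (W i) P), x ∈ Ioi (0:ℝ) := by
      rw [hdist i]; exact ae_pos μ hexp
    exact (ae_map_iff (hmeas i).aemeasurable measurableSet_Ioi).mp h2
  intro n hn
  induction n, hn using Nat.le_induction with
  | base =>
    intro j
    set a := s + (j:ℝ)*(s-lam) with ha_def
    have hj0 : (0:ℝ) ≤ (j:ℝ) := Nat.cast_nonneg j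
    have hla : lam - a = ((j:ℝ)+1)*(lam - s) := by rw [ha_def]; ring
    have ha : a < lam := by nlinarith
    have hms : AEStronglyMeasurable (fun x => Real.exp (a*x)) (Measure.map (W 0) P) :=
      (Real.measurable_exp.comp (measurable_id.const_mul a)).aestronglyMeasurable
    have hfun : (fun ω => Real.exp (s * ∑ k ∈ Finset.Icc 1 1, minFirst W k ω
        + (j:ℝ)*(s-lam) * minFirst W 1 ω)) = (fun x => Real.exp (a * x)) ∘ (W 0) := by
      funext ω
      have h1 : ∑ k ∈ Finset.Icc 1 1, minFirst W k ω = minFirst W 1 ω := by simp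
      have h2 : minFirst W 1 ω = W 0 ω := by
        show min (minFirst W 0 ω) (W 0 ω) = W 0 ω
        rw [minFirst, min_self]
      simp only [Function.comp_apply, h1, h2]
      congr 1; rw [ha_def]; ring
    have hint : Integrable ((fun x => Real.exp (a * x)) ∘ (W 0)) P := by
      refine (integrable_map_measure hms (hmeas 0).aemeasurable).mp ?_
      rw [hdist 0]
      exact integrable_exp_mul hlam μ hμ ha
    have hI : ∫ ω, ((fun x => Real.exp (a * x)) ∘ (W 0)) ω ∂P = lam/(lam - a) := by
      simp only [Function.comp_apply]
      rw [← integral_map (hmeas 0).aemeasurable hms, hdist 0]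
      exact integral_exp_mul hlam μ hμ ha
    refine ⟨hfun ▸ hint, ?_⟩
    rw [hfun, hI, hla]
    simp only [Finset.Icc_self, Finset.prod_singleton, Nat.cast_one]
    have hj1 : ((j:ℝ)+1) ≠ 0 := by positivity
    field_simp
    ring_nf
  | succ n hn IH =>
    intro j
    set a := s + (j:ℝ)*(s-lam) with ha_def
    have hj0 : (0:ℝ) ≤ (j:ℝ) := Nat.cast_nonneg j
    have hla : lam - a = ((j:ℝ)+1)*(lam - s) := by rw [ha_def]; ring
    have ha : a < lam := by nlinarith
    have halam : a - lam = ((j:ℝ)+1)*(s-lam) := by rw [ha_def]; ring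
    -- tuple maps and independence
    have hX : Measurable (fun ω (i : ↥(Finset.range n)) => W i ω) :=
      measurable_pi_lambda _ fun i => hmeas i
    have hdisj : Disjoint (Finset.range n) ({n} : Finset ℕ) := by
      simp [Finset.disjoint_singleton_right]
    have hXY := hindep.indepFun_finset (Finset.range n) {n} hdisj hmeas
    set e : (↥(Finset.range n) → ℝ) → (ℕ → ℝ) :=
      fun v i => if h : i ∈ Finset.range n then v ⟨i, h⟩ else 0 with he_def
    have he : Measurable e := by
      apply measurable_pi_lambda
      intro i
      by_cases h : i ∈ Finset.range n
      · simp only [he_def, dif_pos h]; exact measurable_pi_apply _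
      · simp only [he_def, dif_neg h]; exact measurable_const
    set V : Ω → (ℕ → ℝ) := fun ω => e (fun i : ↥(Finset.range n) => W i ω) with hV_def
    have hV : Measurable V := he.comp hX
    have hVWn : IndepFun V (W n) P := by
      have hev : Measurable (fun v : (↥({n} : Finset ℕ) → ℝ) =>
          v ⟨n, Finset.mem_singleton_self n⟩) := measurable_pi_apply _
      exact hXY.comp he hev
    have hVcoord : ∀ ω, ∀ i < n, V ω i = W i ω := by
      intro ω i hi
      simp only [hV_def, he_def, dif_pos (Finset.mem_range.mpr hi)]
    have hmfV : ∀ ω, ∀ k, 1 ≤ k → k ≤ n → mf (V ω) k = minFirst W k ω := by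
      intro ω k h1 h2
      rw [minFirst_eq_mf]
      exact mf_congr (fun i hi => hVcoord ω i hi) k h1 h2
    set Sf : (ℕ → ℝ) → ℝ := fun u => ∑ k ∈ Finset.Icc 1 n, mf u k with hSf_def
    set Mf : (ℕ → ℝ) → ℝ := fun u => mf u n with hMf_def
    have hSfm : Measurable Sf := Finset.measurable_sum _ fun k _ => measurable_mf k
    have hMfm : Measurable Mf := measurable_mf n
    have hSfV : ∀ ω, Sf (V ω) = ∑ k ∈ Finset.Icc 1 n, minFirst W k ω := by
      intro ω
      apply Finset.sum_congr rfl
      intro k hk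
      rw [Finset.mem_Icc] at hk
      exact hmfV ω k hk.1 hk.2
    have hMfV : ∀ ω, Mf (V ω) = minFirst W n ω := fun ω => hmfV ω n hn le_rfl
    set Φ : (ℕ → ℝ) × ℝ → ℝ :=
      fun p => Real.exp (s * Sf p.1 + a * min (Mf p.1) p.2) with hΦ_def
    have hΦm : Measurable Φ := Real.measurable_exp.comp
      (((hSfm.comp measurable_fst).const_mul s).add
        (((hMfm.comp measurable_fst).min measurable_snd).const_mul a))
    set Z : Ω → (ℕ → ℝ) × ℝ := fun ω => (V ω, W n ω) with hZ_def
    have hZm : Measurable Z := hV.prodMk (hmeas n)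
    have hmapZ : Measure.map Z P = (Measure.map V P).prod μ := by
      have h := (ProbabilityTheory.indepFun_iff_map_prod_eq_prod_map_map
        hV.aemeasurable (hmeas n).aemeasurable).mp hVWn
      rw [hdist n] at h
      exact h
    have hptwise : ∀ ω, Φ (Z ω) = Real.exp (s * ∑ k ∈ Finset.Icc 1 (n+1), minFirst W k ω
        + (j:ℝ)*(s-lam) * minFirst W (n+1) ω) := by
      intro ω
      have hsum : ∑ k ∈ Finset.Icc 1 (n+1), minFirst W k ω
          = (∑ k ∈ Finset.Icc 1 n, minFirst W k ω) + minFirst W (n+1) ω :=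
        Finset.sum_Icc_succ_top (by omega) _
      have hmin : minFirst W (n+1) ω = min (Mf (V ω)) (W n ω) := by
        rw [hMfV]; rfl
      simp only [hΦ_def, hZ_def, hSfV ω, hsum, hmin]
      rw [ha_def]; ring_nf
    have hMpos := minFirst_pos hWpos n
    have IH0 := IH 0
    have IHj1 := IH (j+1)
    have hint_n0 : Integrable (fun ω => Real.exp (s * ∑ k ∈ Finset.Icc 1 n, minFirst W k ω)) P := by
      refine IH0.1.congr (Eventually.of_forall fun ω => ?_)
      norm_num
    have hmsa : AEStronglyMeasurable (fun x => Real.exp (a*x)) (Measure.map (W n) P) :=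
      (Real.measurable_exp.comp (measurable_id.const_mul a)).aestronglyMeasurable
    have hexpWn : Integrable (fun ω => Real.exp (a * W n ω)) P := by
      have h := (integrable_map_measure hmsa (hmeas n).aemeasurable).mp
        (by rw [hdist n]; exact integrable_exp_mul hlam μ hμ ha)
      exact h
    have hprod_int : Integrable (fun ω => Real.exp (s * ∑ k ∈ Finset.Icc 1 n, minFirst W k ω)
        * Real.exp (a * W n ω)) P := by
      have hind2 : IndepFun ((fun u => Real.exp (s * Sf u)) ∘ V)
          ((fun x => Real.exp (a * x)) ∘ (W n)) P :=
        hVWn.comp (Real.measurable_exp.comp (hSfm.const_mul s))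
          (Real.measurable_exp.comp (measurable_id.const_mul a))
      have h1 : Integrable ((fun u => Real.exp (s * Sf u)) ∘ V) P := by
        refine hint_n0.congr (Eventually.of_forall fun ω => ?_)
        simp only [Function.comp_apply, hSfV ω]
      have h := hind2.integrable_mul h1 hexpWn
      refine h.congr (Eventually.of_forall fun ω => ?_)
      simp only [Pi.mul_apply, Function.comp_apply, hSfV ω]
    have hΦZint : Integrable (fun ω => Φ (Z ω)) P := by
      apply Integrable.mono' (hint_n0.add hprod_int) ((hΦm.comp hZm).aestronglyMeasurable)
      filter_upwards [hMpos, hWpos n] with ω h1 h2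
      have hφz : Φ (Z ω) = Real.exp (s * ∑ k ∈ Finset.Icc 1 n, minFirst W k ω)
          * Real.exp (a * min (minFirst W n ω) (W n ω)) := by
        simp only [hΦ_def, hZ_def, hSfV ω, hMfV ω, Real.exp_add]
      rw [Real.norm_eq_abs, Function.comp_apply, hφz, abs_of_pos (by positivity)]
      have hminb : Real.exp (a * min (minFirst W n ω) (W n ω)) ≤ 1 + Real.exp (a * W n ω) := by
        rcases le_or_gt a 0 with hc | hc
        · have hmn : (0:ℝ) ≤ min (minFirst W n ω) (W n ω) := (lt_min h1 h2).le
          have : a * min (minFirst W n ω) (W n ω) ≤ 0 := mul_nonpos_iff.mpr (Or.inr ⟨hc, hmn⟩)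
          calc Real.exp (a * min (minFirst W n ω) (W n ω)) ≤ 1 := Real.exp_le_one_iff.mpr this
            _ ≤ 1 + Real.exp (a * W n ω) := le_add_of_nonneg_right (Real.exp_pos _).le
        · have : a * min (minFirst W n ω) (W n ω) ≤ a * W n ω :=
            mul_le_mul_of_nonneg_left (min_le_right _ _) hc.le
          calc Real.exp (a * min (minFirst W n ω) (W n ω)) ≤ Real.exp (a * W n ω) :=
              Real.exp_le_exp.2 this
            _ ≤ 1 + Real.exp (a * W n ω) := le_add_of_nonneg_left zero_le_one
      calc Real.exp (s * ∑ k ∈ Finset.Icc 1 n, minFirst W k ω)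
            * Real.exp (a * min (minFirst W n ω) (W n ω))
          ≤ Real.exp (s * ∑ k ∈ Finset.Icc 1 n, minFirst W k ω) * (1 + Real.exp (a * W n ω)) :=
            mul_le_mul_of_nonneg_left hminb (Real.exp_pos _).le
        _ = Real.exp (s * ∑ k ∈ Finset.Icc 1 n, minFirst W k ω)
            + Real.exp (s * ∑ k ∈ Finset.Icc 1 n, minFirst W k ω) * Real.exp (a * W n ω) := by
            ring
    have hΦint : Integrable Φ ((Measure.map V P).prod μ) := by
      rw [← hmapZ]
      exact (integrable_map_measure hΦm.aestronglyMeasurable hZm.aemeasurable).mpr hΦZint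
    haveI : IsProbabilityMeasure (Measure.map V P) := Measure.isProbabilityMeasure_map hV.aemeasurable
    have hMf_ae : ∀ᵐ u ∂(Measure.map V P), 0 ≤ Mf u := by
      refine (ae_map_iff hV.aemeasurable (measurableSet_le measurable_const hMfm)).mpr ?_
      filter_upwards [hMpos] with ω h1
      rw [hMfV ω]
      exact h1.le
    -- functions on path space
    set g0 : (ℕ → ℝ) → ℝ := fun u => Real.exp (s * Sf u) with hg0_def
    set g1 : (ℕ → ℝ) → ℝ := fun u => Real.exp (s * Sf u + (a - lam) * Mf u) with hg1_def
    have hg0m : Measurable g0 := Real.measurable_exp.comp (hSfm.const_mul s)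
    have hg1m : Measurable g1 :=
      Real.measurable_exp.comp ((hSfm.const_mul s).add (hMfm.const_mul (a - lam)))
    have hg0P : ∀ ω, g0 (V ω) = Real.exp (s * ∑ k ∈ Finset.Icc 1 n, minFirst W k ω
        + ((0:ℕ):ℝ)*(s-lam) * minFirst W n ω) := by
      intro ω
      simp only [hg0_def, hSfV ω]
      norm_num
    have hg1P : ∀ ω, g1 (V ω) = Real.exp (s * ∑ k ∈ Finset.Icc 1 n, minFirst W k ω
        + (((j+1):ℕ):ℝ)*(s-lam) * minFirst W n ω) := by
      intro ω
      simp only [hg1_def, hSfV ω, hMfV ω]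
      congr 1
      push_cast
      rw [halam]
    have hg0int : Integrable g0 (Measure.map V P) := by
      refine (integrable_map_measure hg0m.aestronglyMeasurable hV.aemeasurable).mpr ?_
      refine IH0.1.congr (Eventually.of_forall fun ω => ?_)
      simp only [Function.comp_apply, hg0P ω]
    have hg1int : Integrable g1 (Measure.map V P) := by
      refine (integrable_map_measure hg1m.aestronglyMeasurable hV.aemeasurable).mpr ?_
      refine IHj1.1.congr (Eventually.of_forall fun ω => ?_)
      simp only [Function.comp_apply, hg1P ω]
    have hg0val : ∫ u, g0 u ∂(Measure.map V P)
        = ∏ k ∈ Finset.Icc 1 n, (1 + (s/lam)/((k:ℝ)*(1-s/lam))) := by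
      rw [integral_map hV.aemeasurable hg0m.aestronglyMeasurable]
      have hn0 : ((n:ℝ)) ≠ 0 := by
        have : (1:ℝ) ≤ (n:ℝ) := by exact_mod_cast hn
        linarith
      have := IH0.2
      simp only [Nat.cast_zero, add_zero, div_self hn0, one_mul] at this
      rw [← this]
      apply integral_congr_ae
      refine Eventually.of_forall fun ω => ?_
      show g0 (V ω) = Real.exp (s * ∑ k ∈ Finset.Icc 1 n, minFirst W k ω
        + 0 * (s - lam) * minFirst W n ω)
      rw [hg0P ω]
      norm_num
    have hg1val : ∫ u, g1 u ∂(Measure.map V P)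
        = (n:ℝ)/((n:ℝ)+(j:ℝ)+1) * ∏ k ∈ Finset.Icc 1 n, (1 + (s/lam)/((k:ℝ)*(1-s/lam))) := by
      rw [integral_map hV.aemeasurable hg1m.aestronglyMeasurable]
      have := IHj1.2
      push_cast at this
      rw [show (n:ℝ) + ((j:ℝ)+1) = (n:ℝ)+(j:ℝ)+1 by ring] at this
      rw [← this]
      apply integral_congr_ae
      refine Eventually.of_forall fun ω => ?_
      have := hg1P ω
      push_cast at this
      exact this
    have hval : ∫ ω, Real.exp (s * ∑ k ∈ Finset.Icc 1 (n+1), minFirst W k ω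
        + (j:ℝ)*(s-lam) * minFirst W (n+1) ω) ∂P
        = lam/(lam-a) * (∫ u, g0 u ∂(Measure.map V P))
          - a/(lam-a) * (∫ u, g1 u ∂(Measure.map V P)) := by
      calc ∫ ω, Real.exp (s * ∑ k ∈ Finset.Icc 1 (n+1), minFirst W k ω
              + (j:ℝ)*(s-lam) * minFirst W (n+1) ω) ∂P
          = ∫ ω, Φ (Z ω) ∂P :=
            integral_congr_ae (Eventually.of_forall fun ω => (hptwise ω).symm)
        _ = ∫ p, Φ p ∂(Measure.map Z P) :=
            (integral_map hZm.aemeasurable hΦm.aestronglyMeasurable).symm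
        _ = ∫ p, Φ p ∂((Measure.map V P).prod μ) := by rw [hmapZ]
        _ = ∫ u, ∫ x, Φ (u, x) ∂μ ∂(Measure.map V P) := integral_prod Φ hΦint
        _ = ∫ u, (lam/(lam-a) * g0 u - a/(lam-a) * g1 u) ∂(Measure.map V P) := by
            apply integral_congr_ae
            filter_upwards [hMf_ae] with u hu
            have hsplit : ∀ x : ℝ, Φ (u, x)
                = Real.exp (s * Sf u) * Real.exp (a * min (Mf u) x) := by
              intro x
              simp only [hΦ_def]
              rw [Real.exp_add]
            simp_rw [hsplit]
            rw [integral_const_mul, integral_exp_min hlam μ hμ hexp ha hu]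
            have hg1e : g1 u = Real.exp (s * Sf u) * Real.exp ((a - lam) * Mf u) := by
              simp only [hg1_def]
              rw [Real.exp_add]
            have hg0e : g0 u = Real.exp (s * Sf u) := by simp only [hg0_def]
            rw [hg0e, hg1e]
            ring
        _ = lam/(lam-a) * (∫ u, g0 u ∂(Measure.map V P))
            - a/(lam-a) * (∫ u, g1 u ∂(Measure.map V P)) := by
            rw [integral_sub (hg0int.const_mul _) (hg1int.const_mul _),
              integral_const_mul, integral_const_mul]
    constructor
    · exact hΦZint.congr (Eventually.of_forall fun ω => hptwise ω)
    · rw [hval, hg0val, hg1val,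
        Finset.prod_Icc_succ_top (show 1 ≤ n+1 by omega)]
      have hn0 : (0:ℝ) < (n:ℝ) := by exact_mod_cast Nat.lt_of_lt_of_le Nat.zero_lt_one hn
      have hnj1 : ((n:ℝ)+(j:ℝ)+1) ≠ 0 := by positivity
      have hlaa : lam - a ≠ 0 := by rw [hla]; positivity
      push_cast
      rw [ha_def]
      generalize ∏ k ∈ Finset.Icc 1 n, (1 + (s/lam)/((k:ℝ)*(1-s/lam))) = Q
      rw [show lam - (s + (j:ℝ)*(s-lam)) = ((j:ℝ)+1)*(lam-s) by ring]
      have hls' : lam - s ≠ 0 := hls.ne'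
      have hj1' : (j:ℝ) + 1 ≠ 0 := by positivity
      field_simp
      ring


end Aux

theorem stmt_13 {Ω : Type*} [MeasurableSpace Ω] (P : Measure Ω) [IsProbabilityMeasure P]
    (lam : ℝ) (hlam : 0 < lam)
    (W : ℕ → Ω → ℝ) (μ : Measure ℝ) [IsProbabilityMeasure μ]
    (hmeas : ∀ i, Measurable (W i))
    (hindep : ProbabilityTheory.iIndepFun W P)
    (hdist : ∀ i, Measure.map (W i) P = μ)
    (hexp : ∀ x : ℝ, 0 ≤ x → μ (Ioi x) = ENNReal.ofReal (Real.exp (-(lam * x))))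
    (n : ℕ) (s : ℝ) (hs : s / lam < 1) :
    ∫ ω, Real.exp (s * ∑ k ∈ Finset.Icc 1 n, minFirst W k ω) ∂P =
      ∏ k ∈ Finset.Icc 1 n, (1 + (s / lam) / (k * (1 - s / lam))) := by
  rcases Nat.eq_zero_or_pos n with h0 | hpos
  · subst h0
    have : Finset.Icc 1 0 = (∅ : Finset ℕ) := by simp
    simp [this]
  · have hslam : s < lam := (div_lt_one hlam).mp hs
    have hμ := mu_eq hlam μ hexp
    have h := (key P hlam W μ hmeas hindep hdist hμ hexp hslam n hpos 0).2
    have hn0 : ((n:ℝ)) ≠ 0 := by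
      have : (1:ℝ) ≤ (n:ℝ) := by exact_mod_cast hpos
      linarith
    simp only [Nat.cast_zero, zero_mul, add_zero, div_self hn0, one_mul] at h
    exact h
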